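/- arXiv:1411.7594 — 2 statements merged into one kernel-verified Lean document; each statement's English description precedes it below -/
import Mathlib

section
/- Let q be an odd prime power and let c ∈ 𝔽_q[x] be a monic squarefree polynomial. Then ω(D(c)) = μ(c)·(−1)^deg(c), where ω is the quadratic character of 𝔽_q^×, D(c) is the discriminant of c, and μ is the Möbius function of 𝔽_q[x] (Pellet's formula). -/
open Polynomial UniqueFactorizationMonoid

open scoped Classical

set_option linter.unusedSectionVars false
set_option linter.unusedVariables false
set_option maxHeartbeats 1000000

section PelletAux

variable {F K : Type*} [Field F] [Fintype F] [Field K] [Algebra F K]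

/-- Fixed points of `x ↦ x^q` in an extension of `F` lie in (the image of) `F`. -/
lemma pellet_fix (q : ℕ) (hq : Fintype.card F = q) {y : K} (hy : y ^ q = y) :
    ∃ a : F, algebraMap F K a = y := by
  classical
  have h1 : 1 < q := hq ▸ Fintype.one_lt_card
  set f : Polynomial K := X ^ q - X with hf
  have hfd : f.natDegree = q := by
    rw [hf]
    rw [Polynomial.natDegree_sub_eq_left_of_natDegree_lt (by simpa using h1)]
    simp
  have hfne : f ≠ 0 := by
    intro h
    rw [h] at hfd
    simp at hfd
    omega
  have hroot : ∀ a : F, (algebraMap F K a) ∈ f.roots := by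
    intro a
    rw [mem_roots hfne]
    have : a ^ q = a := by rw [← hq]; exact FiniteField.pow_card a
    simp only [IsRoot, hf, Polynomial.eval_sub, Polynomial.eval_pow, Polynomial.eval_X]
    rw [← map_pow, this, sub_self]
  set S : Finset K := Finset.univ.image (fun a : F => algebraMap F K a) with hS
  have hScard : S.card = q := by
    rw [hS, Finset.card_image_of_injective _ (algebraMap F K).injective, Finset.card_univ, hq]
  have hsub : S ⊆ f.roots.toFinset := by
    intro x hx
    rw [hS, Finset.mem_image] at hx
    obtain ⟨a, _, rfl⟩ := hx
    rw [Multiset.mem_toFinset]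
    exact hroot a
  have hcard : f.roots.toFinset.card ≤ q := by
    calc f.roots.toFinset.card ≤ Multiset.card f.roots := Multiset.toFinset_card_le _
    _ ≤ f.natDegree := Polynomial.card_roots' f
    _ = q := hfd
  have hEq : S = f.roots.toFinset := Finset.eq_of_subset_of_card_le hsub (by omega)
  have hyy : y ∈ f.roots.toFinset := by
    rw [Multiset.mem_toFinset, mem_roots hfne]
    simp only [IsRoot, hf, Polynomial.eval_sub, Polynomial.eval_pow, Polynomial.eval_X]
    rw [hy, sub_self]
  rw [← hEq, hS, Finset.mem_image] at hyy
  obtain ⟨a, _, ha⟩ := hyy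
  exact ⟨a, ha⟩

/-- Roots of (the base change of) a polynomial over `F` are stable under a map fixing `F`. -/
lemma pellet_stab (φ : K →+* K) (hφ : ∀ a : F, φ (algebraMap F K a) = algebraMap F K a)
    (b : Polynomial F) {x : K} (hx : x ∈ (b.map (algebraMap F K)).roots) :
    φ x ∈ (b.map (algebraMap F K)).roots := by
  rw [mem_roots'] at hx ⊢
  refine ⟨hx.1, ?_⟩
  have hmap : (b.map (algebraMap F K)).map φ = b.map (algebraMap F K) := by
    rw [Polynomial.map_map]
    congr 1
    exact RingHom.ext hφ
  have h2 : (b.map (algebraMap F K)).eval₂ φ (φ x) = φ ((b.map (algebraMap F K)).eval x) :=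
    Polynomial.eval₂_at_apply φ x
  have : ((b.map (algebraMap F K)).map φ).eval (φ x) = 0 := by
    rw [Polynomial.eval_map, h2, hx.2, map_zero]
  rwa [hmap] at this

/-- There is a permutation of any `φ`-stable finset acting as `φ`. -/
lemma pellet_perm (φ : K →+* K) (S : Finset K) (hS : ∀ x ∈ S, φ x ∈ S) :
    ∃ σ : Equiv.Perm ↥S, ∀ y : ↥S, (σ y : K) = φ ↑y := by
  classical
  set f : ↥S → ↥S := fun y => ⟨φ ↑y, hS _ y.2⟩ with hfdef
  have hinj : Function.Injective f := by
    intro a b hab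
    apply Subtype.ext
    apply φ.injective
    exact congrArg Subtype.val hab
  have hbij : Function.Bijective f := Finite.injective_iff_bijective.mp hinj
  exact ⟨Equiv.ofBijective f hbij, fun y => rfl⟩

/-- Orbit structure of `φ` on the roots of an irreducible polynomial. -/
lemma pellet_orbit [IsAlgClosed K] [PerfectField F]
    (φ : K →+* K) (hφ : ∀ a : F, φ (algebraMap F K a) = algebraMap F K a)
    (hfix : ∀ y : K, φ y = y → ∃ a : F, algebraMap F K a = y)
    {g : Polynomial F} (hg : Irreducible g) (hgm : g.Monic) :
    ∃ x : K, (∀ i : ℕ, φ^[i] x ∈ (g.map (algebraMap F K)).roots) ∧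
      φ^[g.natDegree] x = x ∧
      (∀ i j : ℕ, i < g.natDegree → j < g.natDegree → φ^[i] x = φ^[j] x → i = j) ∧
      (∀ y ∈ (g.map (algebraMap F K)).roots, ∃ i < g.natDegree, φ^[i] x = y) := by
  classical
  set ι := algebraMap F K
  set n := g.natDegree with hn
  have hnpos : 0 < n := hg.natDegree_pos
  have hcardroots : Multiset.card (g.map ι).roots = n :=
    (by rw [IsAlgClosed.card_roots_eq_natDegree, Polynomial.natDegree_map])
  have hnodup : (g.map ι).roots.Nodup :=
    nodup_roots ((PerfectField.separable_of_irreducible hg).map)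
  have htf : (g.map ι).roots.toFinset.card = n := by
    rw [Multiset.toFinset_card_of_nodup hnodup, hcardroots]
  -- pick a root
  have hex : ∃ x, x ∈ (g.map ι).roots := by
    apply Multiset.exists_mem_of_ne_zero
    intro h
    rw [h] at hcardroots
    simp at hcardroots
    omega
  obtain ⟨x, hx⟩ := hex
  have hiter : ∀ i : ℕ, φ^[i] x ∈ (g.map ι).roots := by
    intro i
    induction i with
    | zero => simpa using hx
    | succ i ih =>
      rw [Function.iterate_succ_apply']
      exact pellet_stab φ hφ g ih
  -- existence of a period
  have hperiod : ∃ k, 0 < k ∧ φ^[k] x = x := by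
    have hmaps : ∀ i ∈ Finset.range (n + 1), φ^[i] x ∈ (g.map ι).roots.toFinset := by
      intro i _
      rw [Multiset.mem_toFinset]
      exact hiter i
    obtain ⟨i, hi, j, hj, hij, heq⟩ :=
      Finset.exists_ne_map_eq_of_card_lt_of_maps_to (by rw [htf]; simp) hmaps
    rcases Nat.lt_or_ge i j with h | h
    · refine ⟨j - i, by omega, ?_⟩
      have : φ^[i] (φ^[j-i] x) = φ^[i] x := by
        rw [← Function.iterate_add_apply]
        rw [show i + (j - i) = j by omega]
        exact heq.symm
      exact (φ.injective.iterate i) this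
    · have h' : j < i := by omega
      refine ⟨i - j, by omega, ?_⟩
      have : φ^[j] (φ^[i-j] x) = φ^[j] x := by
        rw [← Function.iterate_add_apply]
        rw [show j + (i - j) = i by omega]
        exact heq
      exact (φ.injective.iterate j) this
  set m := Nat.find hperiod with hm
  obtain ⟨hmpos, hmper⟩ : 0 < m ∧ φ^[m] x = x := Nat.find_spec hperiod
  -- distinctness below m
  have hdist : ∀ i j : ℕ, i < m → j < m → φ^[i] x = φ^[j] x → i = j := by
    have key : ∀ i j : ℕ, i < j → j < m → φ^[i] x ≠ φ^[j] x := by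
      intro i j hij hjm heq
      have : φ^[i] (φ^[j-i] x) = φ^[i] x := by
        rw [← Function.iterate_add_apply, show i + (j - i) = j by omega]
        exact heq.symm
      have hper : φ^[j-i] x = x := (φ.injective.iterate i) this
      exact Nat.find_min hperiod (by omega : j - i < m) ⟨by omega, hper⟩
    intro i j hi hj heq
    rcases Nat.lt_trichotomy i j with h | h | h
    · exact absurd heq (key i j h hj)
    · exact h
    · exact absurd heq.symm (key j i h hi)
  -- m ≤ n
  have hmn : m ≤ n := by
    have hinj : Set.InjOn (fun i => φ^[i] x) (Finset.range m) := by
      intro i hi j hj heq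
      exact hdist i j (Finset.mem_range.mp hi) (Finset.mem_range.mp hj) heq
    have hsub : (Finset.range m).image (fun i => φ^[i] x) ⊆ (g.map ι).roots.toFinset := by
      intro y hy
      rw [Finset.mem_image] at hy
      obtain ⟨i, _, rfl⟩ := hy
      rw [Multiset.mem_toFinset]
      exact hiter i
    have := Finset.card_le_card hsub
    rw [Finset.card_image_of_injOn hinj, Finset.card_range, htf] at this
    exact this
  -- n ≤ m via the minimal polynomial
  have hnm : n ≤ m := by
    set h : Polynomial K := ∏ i ∈ Finset.range m, (X - C (φ^[i] x)) with hh
    have hhm : h.Monic := monic_prod_of_monic _ _ (fun i _ => monic_X_sub_C _)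
    have hhdeg : h.natDegree = m := by
      rw [hh, Polynomial.natDegree_prod _ _ (fun i _ => X_sub_C_ne_zero _)]
      simp
    have hmapφ : h.map φ = h := by
      have h1 : h.map φ = ∏ i ∈ Finset.range m, (X - C (φ^[i+1] x)) := by
        rw [hh, Polynomial.map_prod]
        refine Finset.prod_congr rfl (fun i _ => ?_)
        simp [Function.iterate_succ_apply']
      rw [h1, hh]
      set u : ℕ → Polynomial K := fun i => X - C (φ^[i] x) with hu
      have hu0 : u m = u 0 := by simp [hu, hmper]
      have e1 : ∏ i ∈ Finset.range (m+1), u i = (∏ i ∈ Finset.range m, u (i+1)) * u 0 :=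
        Finset.prod_range_succ' u m
      have e2 : ∏ i ∈ Finset.range (m+1), u i = (∏ i ∈ Finset.range m, u i) * u m :=
        Finset.prod_range_succ u m
      have : (∏ i ∈ Finset.range m, u (i+1)) * u 0 = (∏ i ∈ Finset.range m, u i) * u 0 := by
        rw [← e1, e2, hu0]
      exact mul_right_cancel₀ (X_sub_C_ne_zero _) this
    have hlift : h ∈ Polynomial.lifts ι := by
      rw [Polynomial.lifts_iff_coeff_lifts]
      intro j
      have : φ (h.coeff j) = h.coeff j := by
        conv_rhs => rw [← hmapφ]
        rw [Polynomial.coeff_map]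
      obtain ⟨a, ha⟩ := hfix _ this
      exact ⟨a, ha⟩
    obtain ⟨h₀, hh₀, _, hh₀m⟩ := Polynomial.lifts_and_degree_eq_and_monic hlift hhm
    have haev : Polynomial.aeval x g = 0 := by
      have := (mem_roots'.mp hx).2
      rwa [Polynomial.IsRoot, Polynomial.eval_map, ← Polynomial.aeval_def] at this
    have hming : g = minpoly F x := minpoly.eq_of_irreducible_of_monic hg haev hgm
    have hdvd : g ∣ h₀ := by
      rw [hming]
      apply minpoly.dvd
      have : Polynomial.aeval x h₀ = h.eval x := by
        rw [Polynomial.aeval_def, ← Polynomial.eval_map, hh₀]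
      rw [this, hh, Polynomial.eval_prod]
      apply Finset.prod_eq_zero (Finset.mem_range.mpr hmpos)
      simp
    have := Polynomial.natDegree_le_natDegree (Polynomial.degree_le_of_dvd hdvd hh₀m.ne_zero)
    rwa [← hn, show h₀.natDegree = m from by
      rw [← hhdeg, ← hh₀, Polynomial.natDegree_map ι]] at this
  have hmn' : m = n := le_antisymm hmn hnm
  clear_value n
  subst hmn'
  refine ⟨x, hiter, hmper, hdist, ?_⟩
  -- surjectivity
  intro y hy
  have himg : (Finset.range m).image (fun i => φ^[i] x) = (g.map ι).roots.toFinset := by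
    apply Finset.eq_of_subset_of_card_le
    · intro z hz
      rw [Finset.mem_image] at hz
      obtain ⟨i, _, rfl⟩ := hz
      rw [Multiset.mem_toFinset]
      exact hiter i
    · rw [htf, Finset.card_image_of_injOn (fun i hi j hj heq =>
        hdist i j (Finset.mem_range.mp hi) (Finset.mem_range.mp hj) heq), Finset.card_range]
  have : y ∈ (Finset.range m).image (fun i => φ^[i] x) := by
    rw [himg, Multiset.mem_toFinset]; exact hy
  rw [Finset.mem_image] at this
  obtain ⟨i, hi, hix⟩ := this
  exact ⟨i, Finset.mem_range.mp hi, hix⟩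

/-- The sign of the permutation induced by `φ` on the roots of an irreducible polynomial. -/
lemma pellet_cycle [IsAlgClosed K] [PerfectField F]
    (φ : K →+* K) (hφ : ∀ a : F, φ (algebraMap F K a) = algebraMap F K a)
    (hfix : ∀ y : K, φ y = y → ∃ a : F, algebraMap F K a = y)
    {g : Polynomial F} (hg : Irreducible g) (hgm : g.Monic)
    (σ : Equiv.Perm ↥((g.map (algebraMap F K)).roots.toFinset))
    (hσ : ∀ y, (σ y : K) = φ ↑y) :
    Equiv.Perm.sign σ = (-1) ^ (g.natDegree + 1) := by
  classical
  obtain ⟨x, hiter, hper, hdist, hsurj⟩ := pellet_orbit φ hφ hfix hg hgm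
  have hnpos : 0 < g.natDegree := hg.natDegree_pos
  obtain ⟨n', hn'⟩ : ∃ n', g.natDegree = n' + 1 := ⟨g.natDegree - 1, by omega⟩
  rw [hn'] at hper hdist hsurj ⊢
  set v : Fin (n' + 1) → ↥((g.map (algebraMap F K)).roots.toFinset) :=
    fun i => ⟨φ^[i] x, Multiset.mem_toFinset.mpr (hiter i)⟩ with hv
  have hvinj : Function.Injective v := by
    intro i j hij
    have := congrArg Subtype.val hij
    exact Fin.ext (hdist i j i.isLt j.isLt this)
  have hcards : Fintype.card ↥((g.map (algebraMap F K)).roots.toFinset) = n' + 1 := by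
    rw [Fintype.card_coe]
    rw [Multiset.toFinset_card_of_nodup (nodup_roots ((PerfectField.separable_of_irreducible hg).map)),
      IsAlgClosed.card_roots_eq_natDegree, Polynomial.natDegree_map]
    exact hn'
  have hvbij : Function.Bijective v :=
    (Fintype.bijective_iff_injective_and_card v).mpr ⟨hvinj, by simp [hcards]⟩
  set e : Fin (n' + 1) ≃ ↥((g.map (algebraMap F K)).roots.toFinset) := Equiv.ofBijective v hvbij with he
  have hkey : σ = (e.symm.trans (finRotate (n' + 1))).trans e := by
    apply Equiv.ext
    intro y
    obtain ⟨i, rfl⟩ := e.surjective y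
    simp only [Equiv.trans_apply, Equiv.symm_apply_apply]
    apply Subtype.ext
    rw [hσ (e i)]
    have hei : ((e i : ↥((g.map (algebraMap F K)).roots.toFinset)) : K) = φ^[i] x := rfl
    have herot : ((e (finRotate (n' + 1) i) : ↥((g.map (algebraMap F K)).roots.toFinset)) : K)
        = φ^[((finRotate (n' + 1)) i : Fin (n'+1)).val] x := rfl
    rw [hei, herot, finRotate_succ_apply]
    by_cases hlast : i = Fin.last n'
    · rw [hlast]
      simp only [Fin.last_add_one]
      have h9 : φ (φ^[n'] x) = φ^[n' + 1] x := (Function.iterate_succ_apply' φ n' x).symm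
      rw [Fin.val_last, h9, hper]
      rfl
    · have hval : ((i + 1 : Fin (n' + 1))).val = i.val + 1 := by
        rw [Fin.val_add_one]
        simp [hlast]
      rw [hval]
      exact (Function.iterate_succ_apply' φ i.val x).symm
  rw [hkey, Equiv.Perm.sign_symm_trans_trans, sign_finRotate]
  have : (-1 : ℤˣ) ^ (n' + 1 + 1) = (-1) ^ n' := by
    rw [pow_succ, pow_succ]
    simp
  rw [this]
  rw [Nat.add_sub_cancel]

/-- Sign multiplicativity over a disjoint union of stable finsets. -/
lemma pellet_split (φ : K →+* K) {s t : Finset K} (hst : Disjoint s t)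
    (σ : Equiv.Perm ↥(s ∪ t)) (σ₁ : Equiv.Perm ↥s) (σ₂ : Equiv.Perm ↥t)
    (hσ : ∀ y : ↥(s ∪ t), (σ y : K) = φ ↑y)
    (h1 : ∀ y : ↥s, (σ₁ y : K) = φ ↑y) (h2 : ∀ y : ↥t, (σ₂ y : K) = φ ↑y) :
    Equiv.Perm.sign σ = Equiv.Perm.sign σ₁ * Equiv.Perm.sign σ₂ := by
  classical
  have hdisj : Disjoint (↑s : Set K) ↑t := by
    rw [Finset.disjoint_coe]; exact hst
  set uc : ↥(s ∪ t) ≃ ↥((↑s : Set K) ∪ ↑t) :=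
    Equiv.subtypeEquivRight (fun x => by simp) with huc
  set u0 : ↥((↑s : Set K) ∪ ↑t) ≃ ↥s ⊕ ↥t := Equiv.Set.union hdisj with hu0
  set u : ↥(s ∪ t) ≃ ↥s ⊕ ↥t := uc.trans u0 with hu
  have hkey : σ = (u.trans (Equiv.Perm.sumCongr σ₁ σ₂)).trans u.symm := by
    apply Equiv.ext
    intro y
    simp only [Equiv.trans_apply]
    apply u.injective
    rw [Equiv.apply_symm_apply]
    by_cases hy : (y : K) ∈ s
    · have hσy : ((σ y : ↥(s ∪ t)) : K) ∈ s := by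
        rw [hσ y]
        have : (σ₁ ⟨↑y, hy⟩ : K) = φ ↑y := h1 ⟨↑y, hy⟩
        rw [← this]
        exact (σ₁ ⟨↑y, hy⟩).2
      have e1 : u y = Sum.inl ⟨↑y, hy⟩ := by
        show u0 (uc y) = _
        have hm : ((uc y : ↥((↑s : Set K) ∪ ↑t)) : K) ∈ (↑s : Set K) := hy
        rw [hu0]
        exact Equiv.Set.union_apply_left hdisj hm
      have e2 : u (σ y) = Sum.inl ⟨↑(σ y), hσy⟩ := by
        show u0 (uc (σ y)) = _
        have hm : ((uc (σ y) : ↥((↑s : Set K) ∪ ↑t)) : K) ∈ (↑s : Set K) := hσy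
        rw [hu0]
        exact Equiv.Set.union_apply_left hdisj hm
      rw [e2, e1]
      simp only [Equiv.Perm.sumCongr_apply, Sum.map_inl]
      congr 1
      apply Subtype.ext
      show ((σ y : ↥(s ∪ t)) : K) = ((σ₁ ⟨↑y, hy⟩ : ↥s) : K)
      rw [h1 ⟨↑y, hy⟩, hσ y]
    · have hyt : (y : K) ∈ t := by
        have := y.2
        rw [Finset.mem_union] at this
        tauto
      have hσy : ((σ y : ↥(s ∪ t)) : K) ∈ t := by
        rw [hσ y]
        have : (σ₂ ⟨↑y, hyt⟩ : K) = φ ↑y := h2 ⟨↑y, hyt⟩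
        rw [← this]
        exact (σ₂ ⟨↑y, hyt⟩).2
      have hσys : ¬ ((σ y : ↥(s ∪ t)) : K) ∈ (↑s : Set K) :=
        fun h => (Finset.disjoint_left.mp hst h) hσy
      have e1 : u y = Sum.inr ⟨↑y, hyt⟩ := by
        show u0 (uc y) = _
        have hm : ((uc y : ↥((↑s : Set K) ∪ ↑t)) : K) ∈ (↑t : Set K) := hyt
        rw [hu0]
        exact Equiv.Set.union_apply_right hdisj hm
      have e2 : u (σ y) = Sum.inr ⟨↑(σ y), hσy⟩ := by
        show u0 (uc (σ y)) = _
        have hm : ((uc (σ y) : ↥((↑s : Set K) ∪ ↑t)) : K) ∈ (↑t : Set K) := hσy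
        rw [hu0]
        exact Equiv.Set.union_apply_right hdisj hm
      rw [e2, e1]
      simp only [Equiv.Perm.sumCongr_apply, Sum.map_inr]
      congr 1
      apply Subtype.ext
      show ((σ y : ↥(s ∪ t)) : K) = ((σ₂ ⟨↑y, hyt⟩ : ↥t) : K)
      rw [h2 ⟨↑y, hyt⟩, hσ y]
  rw [hkey, Equiv.Perm.sign_trans_trans_symm, Equiv.Perm.sign_sumCongr]

/-- The base case `b = 1`. -/
lemma pellet_sign_one (φ : K →+* K)
    (σ : Equiv.Perm ↥(((1 : Polynomial F).map (algebraMap F K)).roots.toFinset)) :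
    Equiv.Perm.sign σ =
      (-1) ^ ((1 : Polynomial F).natDegree +
        Multiset.card (normalizedFactors (1 : Polynomial F))) := by
  classical
  haveI : IsEmpty ↥(((1 : Polynomial F).map (algebraMap F K)).roots.toFinset) := by
    constructor
    intro y
    have := y.2
    simp [Polynomial.map_one] at this
  have : σ = 1 := by
    apply Equiv.ext
    intro y
    exact (IsEmpty.false y).elim
  rw [this]
  simp [normalizedFactors_one]

/-- The sign of the permutation induced by `φ` on the roots of a monic squarefree
polynomial. -/
lemma pellet_sign [IsAlgClosed K] [PerfectField F]
    (φ : K →+* K) (hφ : ∀ a : F, φ (algebraMap F K a) = algebraMap F K a)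
    (hfix : ∀ y : K, φ y = y → ∃ a : F, algebraMap F K a = y) :
    ∀ (N : ℕ) (b : Polynomial F), b.natDegree ≤ N → b.Monic → Squarefree b →
    ∀ (σ : Equiv.Perm ↥((b.map (algebraMap F K)).roots.toFinset)),
      (∀ y, (σ y : K) = φ ↑y) →
      Equiv.Perm.sign σ = (-1) ^ (b.natDegree + Multiset.card (normalizedFactors b)) := by
  intro N
  induction N with
  | zero =>
    intro b hdeg hm hsf σ hσ
    have hb1 : b = 1 := hm.natDegree_eq_zero.mp (by omega)
    subst hb1
    exact pellet_sign_one φ σ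
  | succ N ih =>
    intro b hdeg hm hsf σ hσ
    by_cases hb1 : b = 1
    · subst hb1
      exact pellet_sign_one φ σ
    · have hb0 : b ≠ 0 := hm.ne_zero
      have hbu : ¬IsUnit b := by
        intro h
        exact hb1 (hm.eq_one_of_isUnit h)
      obtain ⟨g, hgmem⟩ := exists_mem_normalizedFactors hb0 hbu
      have hgirr : Irreducible g := irreducible_of_normalized_factor g hgmem
      have hgnorm : normalize g = g := normalize_normalized_factor g hgmem
      have hgm : g.Monic := by
        rw [← hgnorm]
        exact Polynomial.monic_normalize hgirr.ne_zero
      obtain ⟨b', rfl⟩ := dvd_of_mem_normalizedFactors hgmem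
      have hb'm : b'.Monic := hgm.of_mul_monic_left hm
      have hb'0 : b' ≠ 0 := hb'm.ne_zero
      have hg0 : g ≠ 0 := hgirr.ne_zero
      have hb'sf : Squarefree b' := hsf.squarefree_of_dvd ⟨g, mul_comm g b'⟩
      have hdegmul : (g * b').natDegree = g.natDegree + b'.natDegree :=
        hgm.natDegree_mul hb'm
      have hgpos : 0 < g.natDegree := hgirr.natDegree_pos
      have hb'deg : b'.natDegree ≤ N := by omega
      -- factors count
      have hfacts : Multiset.card (normalizedFactors (g * b')) =
          1 + Multiset.card (normalizedFactors b') := by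
        rw [normalizedFactors_mul hg0 hb'0, Multiset.card_add,
          normalizedFactors_irreducible hgirr, hgnorm]
        simp
      -- root sets
      set s : Finset K := ((g.map (algebraMap F K)).roots).toFinset with hs
      set t : Finset K := ((b'.map (algebraMap F K)).roots).toFinset with ht
      have hU : (((g * b').map (algebraMap F K)).roots).toFinset = s ∪ t := by
        rw [Polynomial.map_mul, Polynomial.roots_mul
          (mul_ne_zero (hgm.map (algebraMap F K)).ne_zero (hb'm.map (algebraMap F K)).ne_zero),
          Multiset.toFinset_add]
      -- disjointness
      have hdisj : Disjoint s t := by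
        rw [Finset.disjoint_left]
        intro x hxs hxt
        rw [hs, Multiset.mem_toFinset] at hxs
        rw [ht, Multiset.mem_toFinset] at hxt
        have haevg : Polynomial.aeval x g = 0 := by
          have := (mem_roots'.mp hxs).2
          rwa [Polynomial.IsRoot, Polynomial.eval_map, ← Polynomial.aeval_def] at this
        have haevb : Polynomial.aeval x b' = 0 := by
          have := (mem_roots'.mp hxt).2
          rwa [Polynomial.IsRoot, Polynomial.eval_map, ← Polynomial.aeval_def] at this
        have hming : g = minpoly F x := minpoly.eq_of_irreducible_of_monic hgirr haevg hgm
        have hdvd : g ∣ b' := by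
          rw [hming]
          exact minpoly.dvd F x haevb
        obtain ⟨w, hw⟩ := hdvd
        have : g * g ∣ g * b' := by
          rw [hw]
          exact ⟨w, by ring⟩
        exact hgirr.not_isUnit (hsf g this)
      -- transport σ
      set e0 : ↥(((g * b').map (algebraMap F K)).roots).toFinset ≃ ↥(s ∪ t) :=
        Equiv.subtypeEquivRight (fun x => by rw [hU]) with he0
      set σ' : Equiv.Perm ↥(s ∪ t) := (e0.symm.trans σ).trans e0 with hσ'def
      have hsign' : Equiv.Perm.sign σ' = Equiv.Perm.sign σ :=
        Equiv.Perm.sign_symm_trans_trans σ e0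
      have hσ' : ∀ y : ↥(s ∪ t), (σ' y : K) = φ ↑y := by
        intro y
        rw [hσ'def]
        simp only [Equiv.trans_apply]
        have h1 : ((e0 (σ (e0.symm y)) : ↥(s ∪ t)) : K) = ((σ (e0.symm y) : K)) := rfl
        have h2 : ((e0.symm y : ↥(((g * b').map (algebraMap F K)).roots).toFinset) : K)
            = (y : K) := rfl
        rw [h1, hσ (e0.symm y), h2]
      -- permutations on the pieces
      have hstabs : ∀ x ∈ s, φ x ∈ s := by
        intro x hx
        rw [hs, Multiset.mem_toFinset] at hx ⊢
        exact pellet_stab φ hφ g hx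
      have hstabt : ∀ x ∈ t, φ x ∈ t := by
        intro x hx
        rw [ht, Multiset.mem_toFinset] at hx ⊢
        exact pellet_stab φ hφ b' hx
      obtain ⟨σ₁, hσ₁⟩ := pellet_perm φ s hstabs
      obtain ⟨σ₂, hσ₂⟩ := pellet_perm φ t hstabt
      have hsplit := pellet_split φ hdisj σ' σ₁ σ₂ hσ' hσ₁ hσ₂
      have hc : Equiv.Perm.sign σ₁ = (-1) ^ (g.natDegree + 1) :=
        pellet_cycle φ hφ hfix hgirr hgm σ₁ hσ₁
      have hi : Equiv.Perm.sign σ₂ =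
          (-1) ^ (b'.natDegree + Multiset.card (normalizedFactors b')) :=
        ih b' hb'deg hb'm hb'sf σ₂ hσ₂
      rw [← hsign', hsplit, hc, hi, hdegmul, hfacts, ← pow_add]
      congr 1
      ring

end PelletAux

lemma pellet_prod_pairs {R : Type*} [CommRing R] (d : ℕ) (v : Fin d → R) :
    ∏ p ∈ (Finset.univ ×ˢ Finset.univ : Finset (Fin d × Fin d)).filter
        (fun p => p.1 ≠ p.2), (v p.1 - v p.2) =
      (-1) ^ (d * (d - 1) / 2) *
        (∏ i : Fin d, ∏ j ∈ Finset.Ioi i, (v j - v i)) ^ 2 := by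
  classical
  set Blt := (Finset.univ ×ˢ Finset.univ : Finset (Fin d × Fin d)).filter
    (fun p => p.1 < p.2) with hBlt
  set Bgt := (Finset.univ ×ˢ Finset.univ : Finset (Fin d × Fin d)).filter
    (fun p => p.2 < p.1) with hBgt
  have hBsplit : (Finset.univ ×ˢ Finset.univ : Finset (Fin d × Fin d)).filter
      (fun p => p.1 ≠ p.2) = Blt ∪ Bgt := by
    ext p
    simp only [hBlt, hBgt, Finset.mem_filter, Finset.mem_union, Finset.mem_product,
      Finset.mem_univ, true_and]
    constructor
    · intro h
      rcases lt_or_gt_of_ne h with h' | h'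
      · exact Or.inl h'
      · exact Or.inr h'
    · rintro (h | h) <;> [exact ne_of_lt h; exact (ne_of_lt h).symm]
  have hBdisj : Disjoint Blt Bgt := by
    rw [Finset.disjoint_left]
    intro p h1 h2
    simp only [hBlt, hBgt, Finset.mem_filter] at h1 h2
    exact absurd h2.2 (not_lt_of_gt h1.2)
  have himg : Bgt = Blt.image Prod.swap := by
    ext p
    simp only [hBlt, hBgt, Finset.mem_filter, Finset.mem_image, Finset.mem_product,
      Finset.mem_univ, true_and]
    constructor
    · intro h
      exact ⟨p.swap, by simpa using h, by simp⟩
    · rintro ⟨q, hq, rfl⟩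
      simpa using hq
  have hprodgt : ∏ p ∈ Bgt, (v p.1 - v p.2) = ∏ p ∈ Blt, (v p.2 - v p.1) := by
    rw [himg, Finset.prod_image (fun x _ y _ h => Prod.swap_injective h)]
    rfl
  -- the strictly-lower product equals the Ioi double product
  have hPeq : ∏ i : Fin d, ∏ j ∈ Finset.Ioi i, (v j - v i)
      = ∏ p ∈ Blt, (v p.2 - v p.1) := by
    rw [Finset.prod_sigma']
    refine Finset.prod_nbij' (fun p => (p.1, p.2)) (fun p => ⟨p.1, p.2⟩) ?_ ?_ ?_ ?_ ?_
    · intro a ha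
      simp only [Finset.mem_sigma, Finset.mem_univ, Finset.mem_Ioi, true_and] at ha
      simp only [hBlt, Finset.mem_filter, Finset.mem_product, Finset.mem_univ, true_and]
      exact ha
    · intro a ha
      simp only [hBlt, Finset.mem_filter, Finset.mem_product, Finset.mem_univ, true_and] at ha
      simp only [Finset.mem_sigma, Finset.mem_univ, Finset.mem_Ioi, true_and]
      exact ha
    · intro a _; rfl
    · intro a _; rfl
    · intro a _; rfl
  -- cardinality of Blt
  have hcardgt : Bgt.card = Blt.card := by
    rw [himg, Finset.card_image_of_injective _ Prod.swap_injective]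
  have hcardne : ((Finset.univ ×ˢ Finset.univ : Finset (Fin d × Fin d)).filter
      (fun p => p.1 ≠ p.2)).card = d * d - d := by
    have : (Finset.univ ×ˢ Finset.univ : Finset (Fin d × Fin d)).filter
        (fun p => p.1 ≠ p.2) = (Finset.univ : Finset (Fin d)).offDiag := by
      ext p
      simp [Finset.mem_offDiag]
    rw [this, Finset.offDiag_card]
    simp
  have hcard2 : 2 * Blt.card = d * d - d := by
    have := Finset.card_union_of_disjoint hBdisj
    rw [← hBsplit, hcardne, hcardgt] at this
    omega
  have hcardlt : Blt.card = d * (d - 1) / 2 := by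
    have hmp : d * (d - 1) = d * d - d := Nat.mul_pred d d
    omega
  calc ∏ p ∈ (Finset.univ ×ˢ Finset.univ : Finset (Fin d × Fin d)).filter
        (fun p => p.1 ≠ p.2), (v p.1 - v p.2)
      = (∏ p ∈ Blt, (v p.1 - v p.2)) * ∏ p ∈ Bgt, (v p.1 - v p.2) := by
        rw [hBsplit, Finset.prod_union hBdisj]
    _ = ∏ p ∈ Blt, ((v p.1 - v p.2) * (v p.2 - v p.1)) := by
        rw [hprodgt, Finset.prod_mul_distrib]
    _ = ∏ p ∈ Blt, ((-1) * (v p.2 - v p.1) ^ 2) := by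
        refine Finset.prod_congr rfl (fun p _ => by ring)
    _ = (-1) ^ Blt.card * (∏ p ∈ Blt, (v p.2 - v p.1)) ^ 2 := by
        rw [Finset.prod_mul_distrib, Finset.prod_const, Finset.prod_pow]
    _ = (-1) ^ (d * (d - 1) / 2) *
        (∏ i : Fin d, ∏ j ∈ Finset.Ioi i, (v j - v i)) ^ 2 := by
        rw [hcardlt, hPeq]

/-- **Pellet's formula.**  Let `F` be a finite field with `q` elements, `q` an odd prime
power, and let `c ∈ F[x]` be monic and squarefree of degree `d`.  Let `D` be the
discriminant of `c`, i.e. the element of `F` whose image in an algebraic closure equals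
`(-1)^(d(d-1)/2) ∏_{i ≠ j} (rᵢ - rⱼ)`, the product taken over ordered pairs of distinct
roots of `c`.  Then `ω(D) = μ(c)·(-1)^d`, where `ω(a) = 1` if `a` is a square and `-1`
otherwise, and `μ(c) = (-1)^r` with `r` the number of (distinct) monic irreducible
factors of `c`. -/
theorem pellet_formula (F : Type*) [Field F] [Fintype F] (q : ℕ)
    (hq : Fintype.card F = q) (hq' : ∃ p k : ℕ, p.Prime ∧ Odd p ∧ 0 < k ∧ q = p ^ k)
    (c : Polynomial F) (hc : c.Monic) (hsf : Squarefree c) (D : F)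
    (hD : algebraMap F (AlgebraicClosure F) D =
      (-1) ^ (c.natDegree * (c.natDegree - 1) / 2) *
        ∏ p ∈ (((c.map (algebraMap F (AlgebraicClosure F))).roots.toFinset ×ˢ
            (c.map (algebraMap F (AlgebraicClosure F))).roots.toFinset).filter
            (fun p : AlgebraicClosure F × AlgebraicClosure F => p.1 ≠ p.2)),
          (p.1 - p.2)) :
    (if IsSquare D then (1 : ℤ) else -1) =
      (-1) ^ Multiset.card (normalizedFactors c) * (-1) ^ c.natDegree := by
  classical
  obtain ⟨p, k, hp, hpodd, hkpos, hqpk⟩ := hq'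
  set K := AlgebraicClosure F with hK
  set ι := algebraMap F K with hι
  -- characteristic
  haveI : CharP F (ringChar F) := ringChar.charP F
  obtain ⟨m, hrp, hcard⟩ := FiniteField.card F (ringChar F)
  have hrc : ringChar F = p := by
    have h1 : p ∣ ringChar F ^ (m : ℕ) := by
      rw [← hcard, hq, hqpk]
      exact dvd_pow_self p (by omega)
    exact ((Nat.prime_dvd_prime_iff_eq hp hrp).mp (hp.dvd_of_dvd_pow h1)).symm
  haveI hFp : CharP F p := hrc ▸ ringChar.charP F
  haveI hKp : CharP K p := charP_of_injective_algebraMap ι.injective p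
  haveI : Fact p.Prime := ⟨hp⟩
  -- Frobenius
  set φ : K →+* K := iterateFrobenius K p k with hφ
  have hφdef : ∀ y : K, φ y = y ^ q := by
    intro y
    rw [hφ, iterateFrobenius_def, hqpk]
  have hφF : ∀ a : F, φ (ι a) = ι a := by
    intro a
    rw [hφdef, ← map_pow, ← hq, FiniteField.pow_card]
  have hfix : ∀ y : K, φ y = y → ∃ a : F, ι a = y := by
    intro y hy
    exact pellet_fix q hq (by rw [← hφdef, hy])
  -- odd q facts
  have hqodd : Odd q := hqpk ▸ hpodd.pow
  obtain ⟨mq, hmq⟩ := hqodd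
  have hchar2 : ringChar F ≠ 2 := by
    intro h
    have := FiniteField.even_card_iff_char_two.mp h
    rw [hq] at this
    omega
  -- roots setup
  set d := c.natDegree with hd
  set Rts : Finset K := (c.map ι).roots.toFinset with hRts
  have hnodup : (c.map ι).roots.Nodup :=
    nodup_roots ((PerfectField.separable_iff_squarefree.mpr hsf).map)
  have hRcard : Rts.card = d := by
    rw [hRts, Multiset.toFinset_card_of_nodup hnodup,
      IsAlgClosed.card_roots_eq_natDegree, Polynomial.natDegree_map]
  set e : Fin d ≃ ↥Rts :=
    (Fintype.equivFinOfCardEq (by rw [Fintype.card_coe]; exact hRcard)).symm with he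
  set v : Fin d → K := fun i => ((e i : ↥Rts) : K) with hv
  have hvinj : Function.Injective v := by
    intro i j hij
    exact e.injective (Subtype.ext hij)
  -- the permutation induced by Frobenius
  have hstab : ∀ x ∈ Rts, φ x ∈ Rts := by
    intro x hx
    rw [hRts, Multiset.mem_toFinset] at hx ⊢
    exact pellet_stab φ hφF c hx
  obtain ⟨σ, hσ⟩ := pellet_perm φ Rts hstab
  -- the square root of the discriminant
  set P : K := ∏ i : Fin d, ∏ j ∈ Finset.Ioi i, (v j - v i) with hP
  have hPne : P ≠ 0 := by
    rw [hP]
    apply Finset.prod_ne_zero_iff.mpr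
    intro i _
    apply Finset.prod_ne_zero_iff.mpr
    intro j hj
    have : i ≠ j := ne_of_lt (Finset.mem_Ioi.mp hj)
    exact sub_ne_zero.mpr (fun h => this ((hvinj h).symm))
  -- D = P^2
  have hDP : ι D = P ^ 2 := by
    have himgA : ((Rts ×ˢ Rts).filter (fun p : K × K => p.1 ≠ p.2)) =
        ((Finset.univ ×ˢ Finset.univ : Finset (Fin d × Fin d)).filter
          (fun p => p.1 ≠ p.2)).image (fun p => (v p.1, v p.2)) := by
      ext ⟨a, b⟩
      simp only [Finset.mem_filter, Finset.mem_image, Finset.mem_product, Finset.mem_univ,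
        true_and]
      constructor
      · rintro ⟨⟨ha, hb⟩, hab⟩
        refine ⟨(e.symm ⟨a, ha⟩, e.symm ⟨b, hb⟩), ?_, ?_⟩
        · intro hEq
          apply hab
          have := congrArg e hEq
          rw [Equiv.apply_symm_apply, Equiv.apply_symm_apply] at this
          exact congrArg Subtype.val this
        · have hva : v (e.symm ⟨a, ha⟩) = a := by
            rw [hv]
            simp [Equiv.apply_symm_apply]
          have hvb : v (e.symm ⟨b, hb⟩) = b := by
            rw [hv]
            simp [Equiv.apply_symm_apply]
          simp [hva, hvb]
      · rintro ⟨⟨i, j⟩, hij, hEq⟩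
        obtain ⟨h1, h2⟩ := Prod.mk.injEq .. ▸ hEq
        refine ⟨⟨?_, ?_⟩, ?_⟩
        · rw [← h1]; exact (e i).2
        · rw [← h2]; exact (e j).2
        · rw [← h1, ← h2]
          intro h
          exact hij (hvinj h)
    have hinjpairs : ∀ x ∈ (Finset.univ ×ˢ Finset.univ : Finset (Fin d × Fin d)).filter
        (fun p => p.1 ≠ p.2), ∀ y ∈ (Finset.univ ×ˢ Finset.univ :
          Finset (Fin d × Fin d)).filter (fun p => p.1 ≠ p.2),
        (fun p : Fin d × Fin d => (v p.1, v p.2)) x =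
          (fun p : Fin d × Fin d => (v p.1, v p.2)) y → x = y := by
      intro x _ y _ hxy
      obtain ⟨h1, h2⟩ := Prod.mk.injEq .. ▸ hxy
      exact Prod.ext (hvinj h1) (hvinj h2)
    have hDF : ι D = (-1) ^ (d * (d - 1) / 2) *
        ∏ p ∈ ((Rts ×ˢ Rts).filter (fun p : K × K => p.1 ≠ p.2)), (p.1 - p.2) := hD
    rw [himgA, Finset.prod_image hinjpairs] at hDF
    rw [pellet_prod_pairs d v] at hDF
    rw [hDF, ← hP, ← mul_assoc, ← pow_add]
    have heven : Even (d * (d - 1) / 2 + d * (d - 1) / 2) := ⟨d * (d - 1) / 2, rfl⟩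
    rw [heven.neg_one_pow, one_mul]
  have hD0 : D ≠ 0 := by
    intro h
    rw [h, map_zero] at hDP
    exact hPne (pow_eq_zero_iff (by norm_num) |>.mp hDP.symm)
  -- Frobenius action on P
  set τ : Equiv.Perm (Fin d) := (e.trans σ).trans e.symm with hτ
  have hsignτ : Equiv.Perm.sign τ = Equiv.Perm.sign σ :=
    Equiv.Perm.sign_trans_trans_symm σ e
  have hφP : φ P = ((Equiv.Perm.sign τ : ℤ) : K) * P := by
    have hPdet : P = (Matrix.vandermonde v).det := by
      rw [hP, Matrix.det_vandermonde]
    have hmat : (Matrix.vandermonde v).map φ = Matrix.vandermonde (fun i => φ (v i)) := by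
      ext i j
      simp [Matrix.map_apply, Matrix.vandermonde_apply, map_pow]
    have hcomp : (fun i => φ (v i)) = fun i => v (τ i) := by
      funext i
      rw [hτ, hv]
      simp only [Equiv.trans_apply, Equiv.apply_symm_apply]
      exact (hσ (e i)).symm
    have hsub : Matrix.vandermonde (fun i => v (τ i)) =
        (Matrix.vandermonde v).submatrix τ id := by
      ext i j
      simp [Matrix.vandermonde_apply, Matrix.submatrix_apply]
    calc φ P = ((Matrix.vandermonde v).map φ).det := by
          rw [hPdet, RingHom.map_det, RingHom.mapMatrix_apply]
      _ = ((Matrix.vandermonde v).submatrix τ id).det := by rw [hmat, hcomp, hsub]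
      _ = ((Equiv.Perm.sign τ : ℤ) : K) * (Matrix.vandermonde v).det := by
          rw [Matrix.det_permute]
      _ = ((Equiv.Perm.sign τ : ℤ) : K) * P := by rw [← hPdet]
  have hPq : P ^ (q - 1) = ((Equiv.Perm.sign τ : ℤ) : K) := by
    have h1 : P ^ q = P ^ (q - 1) * P := by
      rw [← pow_succ]
      congr 1
      omega
    have h2 : P ^ q = ((Equiv.Perm.sign τ : ℤ) : K) * P := by
      rw [← hφdef, hφP]
    exact mul_right_cancel₀ hPne (h1.symm.trans h2)
  -- compute D ^ (q/2)
  have hDpow : ι (D ^ (q / 2)) = ((Equiv.Perm.sign τ : ℤ) : K) := by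
    rw [map_pow, hDP, ← pow_mul]
    rw [show 2 * (q / 2) = q - 1 by omega]
    exact hPq
  -- sign of σ via the factorization
  have hsign : Equiv.Perm.sign σ =
      (-1) ^ (c.natDegree + Multiset.card (normalizedFactors c)) :=
    pellet_sign φ hφF hfix c.natDegree c le_rfl hc hsf σ hσ
  have hEuler : IsSquare D ↔ D ^ (q / 2) = 1 := by
    have := FiniteField.isSquare_iff hchar2 hD0
    rwa [hq] at this
  set r := Multiset.card (normalizedFactors c) with hr
  rcases Int.units_eq_one_or (Equiv.Perm.sign τ) with hs | hs
  · have hD1 : D ^ (q / 2) = 1 := by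
      apply ι.injective
      rw [hDpow, hs, map_one]
      norm_num
    rw [if_pos (hEuler.mpr hD1)]
    have hu : ((-1 : ℤˣ)) ^ (d + r) = 1 := by
      rw [← hsign, ← hsignτ, hs]
    have hz : ((-1 : ℤ)) ^ (d + r) = 1 := by
      have := congrArg (Units.val) hu
      simpa using this
    rw [pow_add] at hz
    rw [mul_comm]
    exact hz.symm
  · have hDm1 : D ^ (q / 2) = -1 := by
      apply ι.injective
      rw [hDpow, hs, map_neg, map_one]
      norm_num
    have hnots : ¬ IsSquare D := by
      intro h
      have h2 := hEuler.mp h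
      rw [hDm1] at h2
      exact (Ring.neg_one_ne_one_of_char_ne_two hchar2) h2
    rw [if_neg hnots]
    have hu : ((-1 : ℤˣ)) ^ (d + r) = -1 := by
      rw [← hsign, ← hsignτ, hs]
    have hz : ((-1 : ℤ)) ^ (d + r) = -1 := by
      have := congrArg (Units.val) hu
      simpa using this
    rw [pow_add] at hz
    rw [mul_comm]
    exact hz.symm
end

section
/- Let q be an odd prime power and n | q − 1 with n even or odd, and let χ(x) = x^((q−1)/n) on 𝔽_q^×. For c ∈ 𝔽_q[x] monic with distinct roots in an algebraic closure, the n-th power residue symbol of the derivative satisfies (c'/c)_n = χ(D(c)) if deg(c) ≡ 0, 1 (mod 4) and (c'/c)_n = χ(−D(c)) if deg(c) ≡ 2, 3 (mod 4), where D(c) is the discriminant of c. -/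
open Polynomial UniqueFactorizationMonoid

open scoped Classical

private lemma aux_geom (q : ℕ) (hq : 1 ≤ q) (m : ℕ) :
    (q - 1) * ∑ i ∈ Finset.range m, q ^ i = q ^ m - 1 := by
  induction m with
  | zero => simp
  | succ m ih =>
    rw [Finset.sum_range_succ, Nat.mul_add, ih, pow_succ]
    have h1 : 1 ≤ q ^ m := Nat.one_le_pow _ _ hq
    have h2 : (q - 1) * q ^ m = q ^ m * q - q ^ m := by
      rw [Nat.sub_mul, one_mul, mul_comm]
    have h3 : q ^ m ≤ q ^ m * q := Nat.le_mul_of_pos_right _ hq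
    omega

private lemma aux_norm (F K : Type*) [Field F] [Fintype F] [Field K] [Algebra F K]
    [FiniteDimensional F K] (x : K) :
    x ^ (∑ i ∈ Finset.range (Module.finrank F K), Fintype.card F ^ i) =
      algebraMap F K (Algebra.norm F x) := by
  classical
  haveI : Finite K := Module.finite_of_finite F
  haveI : Fintype K := Fintype.ofFinite K
  obtain ⟨p, hpc⟩ := CharP.exists F
  haveI : CharP F p := hpc
  obtain ⟨k, hpp, hcard⟩ := FiniteField.card F p
  haveI : Fact p.Prime := ⟨hpp⟩
  haveI : CharP K p := charP_of_injective_algebraMap (algebraMap F K).injective p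
  set q := Fintype.card F with hq
  set m := Module.finrank F K with hm
  have hq2 : 2 ≤ q := Fintype.one_lt_card
  have hFq : ∀ a : F, a ^ q = a := fun a => by rw [hq]; exact FiniteField.pow_card a
  let φ₀ : K →ₐ[F] K :=
    { toRingHom := iterateFrobenius K p k
      commutes' := fun a => by
        show iterateFrobenius K p k (algebraMap F K a) = algebraMap F K a
        rw [iterateFrobenius_def, ← map_pow, ← hcard, hFq] }
  have hbij₀ : Function.Bijective φ₀ :=
    Finite.injective_iff_bijective.mp (φ₀ : K →+* K).injective
  let φ : K ≃ₐ[F] K := AlgEquiv.ofBijective φ₀ hbij₀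
  have hφ : ∀ y : K, φ y = y ^ q := fun y => by
    show iterateFrobenius K p k y = y ^ q
    rw [iterateFrobenius_def, ← hcard]
  have hφpow : ∀ (i : ℕ) (y : K), (φ ^ i) y = y ^ q ^ i := by
    intro i
    induction i with
    | zero => intro y; simp
    | succ i ih =>
      intro y
      rw [pow_succ, AlgEquiv.mul_apply, hφ, ih, ← pow_mul]
      congr 1
      rw [pow_succ']
  have hinj : Function.Injective fun i : Fin m => φ ^ (i : ℕ) := by
    intro i j hij
    simp only at hij
    wlog hle : (i : ℕ) ≤ (j : ℕ) generalizing i j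
    · exact (this hij.symm (le_of_not_ge hle)).symm
    by_contra hne
    have ht : 0 < (j : ℕ) - (i : ℕ) := by
      have : (i : ℕ) ≠ (j : ℕ) := fun h => hne (Fin.ext h)
      omega
    set t := (j : ℕ) - (i : ℕ) with htdef
    have hfix : ∀ y : K, y ^ q ^ t = y := by
      intro y
      have h1 : (φ ^ (i : ℕ)) ((φ ^ t) y) = (φ ^ (i : ℕ)) y := by
        rw [← AlgEquiv.mul_apply, ← pow_add]
        have h2 : (i : ℕ) + t = (j : ℕ) := by omega
        rw [h2, hij]
      have := (φ ^ (i : ℕ)).injective h1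
      rwa [hφpow] at this
    have hqt : 1 < q ^ t := Nat.one_lt_pow (by omega) hq2
    have hpoly : (X ^ q ^ t - X : K[X]) = 0 := by
      apply Polynomial.eq_zero_of_forall_eval_zero_of_natDegree_lt_card
      · intro y; simp [hfix y]
      · have hdeg : (X ^ q ^ t - X : K[X]).natDegree ≤ q ^ t := by
          refine le_trans (natDegree_sub_le _ _) ?_
          simp [natDegree_X_pow, natDegree_X]
          omega
        have hcardK : Fintype.card K = q ^ m := Module.card_eq_pow_finrank
        have hlt : q ^ t < q ^ m := by
          apply Nat.pow_lt_pow_right hq2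
          omega
        rw [Cardinal.mk_fintype, hcardK]
        exact_mod_cast lt_of_le_of_lt hdeg hlt
    have h1 : (X ^ q ^ t - X : K[X]).coeff (q ^ t) = 1 := by
      rw [Polynomial.coeff_sub, Polynomial.coeff_X_pow, if_pos rfl, Polynomial.coeff_X,
        if_neg (by omega)]
      ring
    rw [hpoly] at h1
    simp at h1
  have hcardaut : Fintype.card (K ≃ₐ[F] K) = m := by
    rw [← Nat.card_eq_fintype_card]; exact IsGalois.card_aut_eq_finrank F K
  have hbij : Function.Bijective fun i : Fin m => φ ^ (i : ℕ) :=
    (Fintype.bijective_iff_injective_and_card _).mpr ⟨hinj, by simp [hcardaut]⟩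
  rw [Algebra.norm_eq_prod_automorphisms, ← Function.Bijective.prod_comp hbij fun σ => σ x]
  simp only [hφpow]
  rw [Finset.sum_range fun i => q ^ i, ← Finset.prod_pow_eq_pow_sum]

private lemma aux_factor (F : Type*) [Field F] [Fintype F] (q n : ℕ)
    (hq : Fintype.card F = q) (hn : 0 < n) (hdvd : n ∣ q - 1)
    (π a : Polynomial F) (hmon : π.Monic) (hirr : Irreducible π)
    (s : F) (hs : π ∣ (a ^ ((q ^ π.natDegree - 1) / n) - Polynomial.C s)) :
    algebraMap F (AlgebraicClosure F) s =
      (((π.map (algebraMap F (AlgebraicClosure F))).roots.map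
        (fun r => (a.map (algebraMap F (AlgebraicClosure F))).eval r)).prod) ^ ((q - 1) / n) := by
  classical
  have hq2 : 2 ≤ q := by rw [← hq]; exact Fintype.one_lt_card
  haveI : Fact (Irreducible π) := ⟨hirr⟩
  set K := AdjoinRoot π with hK
  have hπ0 : π ≠ 0 := hirr.ne_zero
  let pb := AdjoinRoot.powerBasis hπ0
  haveI : Module.Finite F K := pb.finite
  set m := π.natDegree with hm
  have hrank : Module.finrank F K = m := by
    rw [pb.finrank]
    rfl
  -- exponent arithmetic
  set e := (q - 1) / n with he
  set S := ∑ i ∈ Finset.range m, q ^ i with hS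
  have hne : n * e = q - 1 := Nat.mul_div_cancel' hdvd
  have hgeom : (q - 1) * S = q ^ m - 1 := aux_geom q (by omega) m
  have hM : (q ^ m - 1) / n = S * e := by
    have h1 : q ^ m - 1 = S * e * n := by rw [← hgeom, ← hne]; ring
    rw [h1, Nat.mul_div_cancel _ hn]
  -- in K
  have h0 : (AdjoinRoot.mk π) (a ^ ((q ^ m - 1) / n) - Polynomial.C s) = 0 :=
    AdjoinRoot.mk_eq_zero.mpr hs
  rw [map_sub, map_pow, AdjoinRoot.mk_C, sub_eq_zero] at h0
  have hnorm : (AdjoinRoot.mk π a) ^ ((q ^ m - 1) / n) =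
      algebraMap F K (Algebra.norm F (AdjoinRoot.mk π a) ^ e) := by
    rw [hM, pow_mul, map_pow]
    congr 1
    have := aux_norm F K (AdjoinRoot.mk π a)
    rwa [hrank, hq] at this
  have hs' : algebraMap F K s = algebraMap F K (Algebra.norm F (AdjoinRoot.mk π a) ^ e) := by
    rw [← hnorm, AdjoinRoot.algebraMap_eq, h0]
  have hs2 : s = Algebra.norm F (AdjoinRoot.mk π a) ^ e := (algebraMap F K).injective hs'
  -- to the algebraic closure
  set A := AlgebraicClosure F with hA
  haveI : Finite K := Module.finite_of_finite F
  rw [hs2, map_pow]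
  congr 1
  rw [Algebra.norm_eq_prod_embeddings F A (AdjoinRoot.mk π a)]
  have hgen : minpoly F pb.gen = π := AdjoinRoot.minpoly_powerBasis_gen_of_monic hmon
  have hsep : π.Separable := PerfectField.separable_of_irreducible hirr
  have hnodup : ((π.map (algebraMap F A)).roots).Nodup := Polynomial.nodup_roots hsep.map
  calc ∏ σ : K →ₐ[F] A, σ (AdjoinRoot.mk π a)
      = ∏ σ : K →ₐ[F] A, aeval (σ pb.gen) a := by
        refine Finset.prod_congr rfl fun σ _ => ?_
        rw [show pb.gen = AdjoinRoot.root π from rfl, aeval_algHom_apply, AdjoinRoot.aeval_eq]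
    _ = ∏ y : {y // y ∈ (minpoly F pb.gen).aroots A}, aeval (y : A) a := by
        refine Fintype.prod_equiv pb.liftEquiv' _ _ fun σ => ?_
        simp [PowerBasis.liftEquiv'_apply_coe]
    _ = ((π.map (algebraMap F A)).roots.map (fun r => (a.map (algebraMap F A)).eval r)).prod := by
        have hnodup' : ((minpoly F pb.gen).aroots A).Nodup := by rw [hgen]; exact hnodup
        rw [Finset.prod_mem_multiset _ _ (fun r => (a.map (algebraMap F A)).eval r)
          (fun y => by simp only [aeval_def]; rw [← eval_map]),
          Finset.prod_eq_multiset_prod, Multiset.toFinset_val,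
          Multiset.dedup_eq_self.mpr hnodup', hgen]

private lemma aux_parity (d : ℕ) :
    (d * (d - 1) / 2) % 2 = if d % 4 = 0 ∨ d % 4 = 1 then 0 else 1 := by
  have hr4 : d % 4 < 4 := Nat.mod_lt _ (by norm_num)
  set k := d / 4 with hk
  have hdk : d = 4 * k + d % 4 := by omega
  rcases hr : d % 4 with _ | _ | _ | _ | r
  · rcases Nat.eq_zero_or_pos k with hk0 | hk0
    · have hd0 : d = 0 := by omega
      subst hd0; simp
    · have hd2 : d - 1 = 4 * (k - 1) + 3 := by omega
      have hd1 : d = 4 * (k - 1) + 4 := by omega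
      rw [if_pos (by omega), hd2, hd1]
      generalize k - 1 = j
      have hmul : (4 * j + 4) * (4 * j + 3) = 16 * (j * j) + 28 * j + 12 := by ring
      rw [hmul]; generalize j * j = J; omega
  · have hd2 : d - 1 = 4 * k := by omega
    have hd1 : d = 4 * k + 1 := by omega
    rw [if_pos (by omega), hd2, hd1]
    have hmul : (4 * k + 1) * (4 * k) = 16 * (k * k) + 4 * k := by ring
    rw [hmul]; generalize k * k = J; omega
  · have hd2 : d - 1 = 4 * k + 1 := by omega
    have hd1 : d = 4 * k + 2 := by omega
    rw [if_neg (by omega), hd2, hd1]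
    have hmul : (4 * k + 2) * (4 * k + 1) = 16 * (k * k) + 12 * k + 2 := by ring
    rw [hmul]; generalize k * k = J; omega
  · have hd2 : d - 1 = 4 * k + 2 := by omega
    have hd1 : d = 4 * k + 3 := by omega
    rw [if_neg (by omega), hd2, hd1]
    have hmul : (4 * k + 3) * (4 * k + 2) = 16 * (k * k) + 20 * k + 6 := by ring
    rw [hmul]; generalize k * k = J; omega
  · omega

private lemma aux_sign {A : Type*} [Monoid A] [HasDistribNeg A] (d : ℕ) :
    ((-1 : A) ^ (d * (d - 1) / 2)) = if d % 4 = 0 ∨ d % 4 = 1 then 1 else -1 := by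
  have h := aux_parity d
  split_ifs at h ⊢ with hcond
  · exact Even.neg_one_pow (Nat.even_iff.mpr h)
  · exact Odd.neg_one_pow (Nat.odd_iff.mpr h)

/-- Let `F = 𝔽_q` with `q` an odd prime power, `n ∣ q - 1`, and `χ(a) = a^((q-1)/n)`.
Let `c ∈ F[x]` be monic squarefree of degree `d`, with discriminant `D` (the element of
`F` whose image in an algebraic closure is `(-1)^(d(d-1)/2) ∏_{i≠j}(rᵢ - rⱼ)` over the
roots of `c`).  Let `sym a π = (a/π)_n` denote the `n`-th power residue symbol: the
unique `n`-th root of unity congruent to `a^((q^{deg π}-1)/n)` mod `π`, extended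
multiplicatively to `(c'/c)_n = ∏_{π ∣ c} (c'/π)_n`.  Then
`(c'/c)_n = χ(D)` if `d ≡ 0, 1 (mod 4)` and `(c'/c)_n = χ(-D)` if `d ≡ 2, 3 (mod 4)`. -/
theorem residue_symbol_of_derivative (F : Type*) [Field F] [Fintype F] (q n : ℕ)
    (hq : Fintype.card F = q) (hq' : ∃ p k : ℕ, p.Prime ∧ Odd p ∧ 0 < k ∧ q = p ^ k)
    (hn : 0 < n) (hdvd : n ∣ q - 1)
    (sym : Polynomial F → Polynomial F → F)
    (hsym : ∀ a π : Polynomial F, π.Monic → Irreducible π → ¬ π ∣ a →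
      (sym a π) ^ n = 1 ∧
        π ∣ (a ^ ((q ^ π.natDegree - 1) / n) - Polynomial.C (sym a π)))
    (c : Polynomial F) (hc : c.Monic) (hsf : Squarefree c) (D : F)
    (hD : algebraMap F (AlgebraicClosure F) D =
      (-1) ^ (c.natDegree * (c.natDegree - 1) / 2) *
        ∏ p ∈ (((c.map (algebraMap F (AlgebraicClosure F))).roots.toFinset ×ˢ
            (c.map (algebraMap F (AlgebraicClosure F))).roots.toFinset).filter
            (fun p : AlgebraicClosure F × AlgebraicClosure F => p.1 ≠ p.2)),
          (p.1 - p.2)) :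
    (∏ π ∈ (normalizedFactors c).toFinset, sym c.derivative π) =
      (if c.natDegree % 4 = 0 ∨ c.natDegree % 4 = 1 then D else -D) ^ ((q - 1) / n) := by
  classical
  set A := AlgebraicClosure F with hA
  set d := c.natDegree with hd
  set e := (q - 1) / n with he
  set nf := normalizedFactors c with hnf
  have hsep : c.Separable := (PerfectField.separable_iff_squarefree).mpr hsf
  have hc0 : c ≠ 0 := hc.ne_zero
  have hnodupnf : nf.Nodup := (squarefree_iff_nodup_normalizedFactors hc0).mp hsf
  have hmem : ∀ π ∈ nf, π.Monic ∧ Irreducible π ∧ ¬ π ∣ c.derivative := by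
    intro π hπ
    have hπ0 : π ≠ 0 := fun h => zero_notMem_normalizedFactors c (h ▸ hπ)
    have hirr : Irreducible π := irreducible_of_normalized_factor π hπ
    have hmon : π.Monic := by
      have := Polynomial.monic_normalize hπ0
      rwa [normalize_normalized_factor π hπ] at this
    exact ⟨hmon, hirr, fun hdvd' =>
      hirr.not_isUnit (hsep.isUnit_of_dvd' (dvd_of_mem_normalizedFactors hπ) hdvd')⟩
  have hprodnf : nf.prod = c := by
    have hassoc : Associated nf.prod c := prod_normalizedFactors hc0
    have hmonprod : nf.prod.Monic := by
      have := monic_multiset_prod_of_monic nf id (fun π hπ => (hmem π hπ).1)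
      rwa [Multiset.map_id] at this
    exact Polynomial.eq_of_monic_of_associated hmonprod hc hassoc
  have hcA : c.map (algebraMap F A) = (nf.map (fun π => π.map (algebraMap F A))).prod := by
    conv_lhs => rw [← hprodnf]
    have h := Multiset.prod_hom (s := nf) (Polynomial.mapRingHom (algebraMap F A)).toMonoidHom
    simpa [Polynomial.coe_mapRingHom] using h.symm
  have hroots : (c.map (algebraMap F A)).roots
      = nf.bind (fun π => (π.map (algebraMap F A)).roots) := by
    rw [hcA, Polynomial.roots_multiset_prod, Multiset.bind_map]
    intro h0
    obtain ⟨π, hπ, hπ0⟩ := Multiset.mem_map.mp h0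
    exact (hmem π hπ).2.1.ne_zero (by
      have : π.map (algebraMap F A) = 0 := hπ0
      exact (Polynomial.map_eq_zero _).mp this)
  have hsepA : (c.map (algebraMap F A)).Separable := hsep.map
  have hnodupA : (c.map (algebraMap F A)).roots.Nodup := Polynomial.nodup_roots hsepA
  apply (algebraMap F A).injective
  rw [map_prod]
  have hfac : ∀ π ∈ nf.toFinset, algebraMap F A (sym c.derivative π)
      = (((π.map (algebraMap F A)).roots.map
          (fun r => (c.derivative.map (algebraMap F A)).eval r)).prod) ^ e := by
    intro π hπ
    rw [Multiset.mem_toFinset] at hπ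
    obtain ⟨hmon, hirr, hnd⟩ := hmem π hπ
    exact aux_factor F q n hq hn hdvd π c.derivative hmon hirr _
      ((hsym c.derivative π hmon hirr hnd).2)
  rw [Finset.prod_congr rfl hfac, Finset.prod_pow]
  have hTmult : ∀ g : Polynomial F → A, ∏ π ∈ nf.toFinset, g π = (nf.map g).prod := by
    intro g
    rw [Finset.prod_eq_multiset_prod, Multiset.toFinset_val, Multiset.dedup_eq_self.mpr hnodupnf]
  rw [hTmult]
  have hbig : (nf.map (fun π => ((π.map (algebraMap F A)).roots.map
      (fun r => (c.derivative.map (algebraMap F A)).eval r)).prod)).prod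
      = ((c.map (algebraMap F A)).roots.map
          (fun r => (c.derivative.map (algebraMap F A)).eval r)).prod := by
    rw [hroots, Multiset.map_bind, Multiset.prod_bind]
  rw [hbig]
  set R := (c.map (algebraMap F A)).roots with hR
  have hcsplit : c.map (algebraMap F A) = (R.map (fun r => X - C r)).prod := by
    exact (IsAlgClosed.splits (c.map (algebraMap F A))).eq_prod_roots_of_monic
      (hc.map (algebraMap F A))
  have heval : ∀ r ∈ R, (c.derivative.map (algebraMap F A)).eval r
      = ((R.erase r).map (fun s => r - s)).prod := by
    intro r hr
    rw [← Polynomial.derivative_map]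
    have hsplit2 : c.map (algebraMap F A)
        = (X - C r) * ((R.erase r).map (fun s => X - C s)).prod := by
      conv_lhs => rw [hcsplit, ← Multiset.cons_erase hr]
      rw [Multiset.map_cons, Multiset.prod_cons]
    rw [hsplit2, derivative_mul, eval_add, eval_mul, eval_mul, derivative_sub, derivative_X,
      derivative_C, sub_zero, eval_one, one_mul, eval_sub, eval_X, eval_C, sub_self, zero_mul,
      add_zero, Polynomial.eval_multiset_prod, Multiset.map_map]
    congr 1
    apply Multiset.map_congr rfl
    intro s hs
    simp
  have hV : (R.map (fun r => (c.derivative.map (algebraMap F A)).eval r)).prod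
      = (R.map (fun r => ((R.erase r).map (fun s => r - s)).prod)).prod := by
    congr 1
    exact Multiset.map_congr rfl heval
  rw [hV]
  set T := R.toFinset with hT
  have hRT : ∀ g : A → A, (R.map g).prod = ∏ r ∈ T, g r := fun g => by
    rw [Finset.prod_eq_multiset_prod, Multiset.toFinset_val, Multiset.dedup_eq_self.mpr hnodupA]
  have hRTe : ∀ (r : A) (g : A → A), ((R.erase r).map g).prod = ∏ s ∈ T.erase r, g s := by
    intro r g
    rw [Finset.prod_eq_multiset_prod, Finset.erase_val, Multiset.toFinset_val,
      Multiset.dedup_eq_self.mpr hnodupA]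
  have hpair : (R.map (fun r => ((R.erase r).map (fun s => r - s)).prod)).prod
      = ∏ pp ∈ ((T ×ˢ T).filter (fun pp : A × A => pp.1 ≠ pp.2)), (pp.1 - pp.2) := by
    rw [hRT, Finset.prod_filter, Finset.prod_product]
    refine Finset.prod_congr rfl fun r hr => ?_
    rw [hRTe, ← Finset.prod_filter]
    congr 1
    ext s
    simp [Finset.mem_erase, Finset.mem_filter, and_comm, ne_comm]
  rw [hpair]
  have hP : (∏ pp ∈ ((T ×ˢ T).filter (fun pp : A × A => pp.1 ≠ pp.2)), (pp.1 - pp.2))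
      = (-1 : A) ^ (d * (d - 1) / 2) * algebraMap F A D := by
    rw [hD, ← mul_assoc, ← pow_add, Even.neg_one_pow ⟨d * (d - 1) / 2, rfl⟩, one_mul]
  rw [hP, map_pow, apply_ite (algebraMap F A), map_neg, aux_sign]
  split_ifs with hcond
  · rw [one_mul]
  · rw [neg_one_mul]
end
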